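/- Let (X,T) be a minimal Cantor system such that the infinitesimal subgroup of K⁰(X,T) is trivial, i.e., every f ∈ C(X,ℤ) with ∫ f dμ = 0 for all μ ∈ M(X,T) is of the form f = g∘T − g for some g ∈ C(X,ℤ). Then the quotient group I(X,T)/E(X,T) is torsion free; explicitly, for every α ∈ ℝ and every integer k ≥ 1, if α ∈ I(X,T) and k·α ∈ E(X,T), then α ∈ E(X,T). -/

import Mathlib

open MeasureTheory
open MeasureTheory TopologicalSpace

lemma countable_intCM {X : Type*} [TopologicalSpace X] [CompactSpace X]
    [MetrizableSpace X] : Countable C(X, ℤ) := by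
  letI := TopologicalSpace.metrizableSpaceMetric X
  haveI : SecondCountableTopology X := inferInstance
  haveI : SeparableSpace C(X, ℝ) := inferInstance
  obtain ⟨D, hDc, hDd⟩ := TopologicalSpace.exists_countable_dense C(X, ℝ)
  haveI : Countable ↥D := hDc.to_subtype
  set J : C(X, ℤ) → C(X, ℝ) := fun f =>
    ⟨fun x => (f x : ℝ), (continuous_of_discreteTopology (f := (Int.cast : ℤ → ℝ))).comp
      f.continuous⟩ with hJ
  have hsep : ∀ f g : C(X, ℤ), f ≠ g → 1 ≤ dist (J f) (J g) := by
    intro f g hfg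
    obtain ⟨x, hx⟩ : ∃ x, f x ≠ g x := by
      by_contra hc; push_neg at hc; exact hfg (ContinuousMap.ext hc)
    have h := Int.one_le_abs (sub_ne_zero.mpr hx)
    have h1 : (1 : ℝ) ≤ |(f x : ℝ) - (g x : ℝ)| := by
      calc (1:ℝ) = ((1:ℤ):ℝ) := by norm_num
        _ ≤ ((|f x - g x| : ℤ) : ℝ) := by exact_mod_cast h
        _ = |(f x : ℝ) - (g x : ℝ)| := by push_cast; ring_nf
    calc (1:ℝ) ≤ |(f x : ℝ) - (g x : ℝ)| := h1
      _ = dist (J f x) (J g x) := by simp [hJ, Real.dist_eq]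
      _ ≤ dist (J f) (J g) := ContinuousMap.dist_apply_le_dist x
  have hchoose : ∀ f : C(X, ℤ), ∃ d : ↥D, dist (J f) (d : C(X, ℝ)) < 1/2 := by
    intro f
    obtain ⟨d, hdD, hd⟩ := Metric.mem_closure_iff.mp (hDd (J f)) (1/2) (by norm_num)
    exact ⟨⟨d, hdD⟩, hd⟩
  choose Φ hΦ using hchoose
  have hinj : Function.Injective Φ := by
    intro f g hfg
    by_contra hne
    have hge := hsep f g hne
    have h2 : dist (J f) (J g) < 1 := by
      have hf' := hΦ f
      rw [hfg] at hf'
      have hg' : dist ((Φ g : C(X,ℝ))) (J g) < 1/2 := by rw [dist_comm]; exact hΦ g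
      calc dist (J f) (J g) ≤ dist (J f) (Φ g : C(X,ℝ)) + dist (Φ g : C(X,ℝ)) (J g) :=
            dist_triangle _ _ _
        _ < 1/2 + 1/2 := by linarith
        _ = 1 := by norm_num
    linarith
  exact Function.Injective.countable hinj

lemma invariant_const' {X : Type*} [TopologicalSpace X] (T : X ≃ₜ X)
    (hmin : ∀ x : X, Dense (Set.range fun n : ℤ => (T.toEquiv ^ n) x))
    {φ : X → ℝ} (hφ : Continuous φ) (hinv : ∀ x, φ (T x) = φ x) (x₀ x : X) :
    φ x = φ x₀ := by
  have hsymm : ∀ y, φ (T.symm y) = φ y := by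
    intro y
    have h := hinv (T.symm y)
    rw [Homeomorph.apply_symm_apply] at h; exact h.symm
  have horb : ∀ n : ℤ, φ ((T.toEquiv ^ n) x₀) = φ x₀ := by
    intro n
    induction n using Int.induction_on with
    | zero => simp
    | succ i ih =>
      have hpow : (T.toEquiv ^ ((i : ℤ) + 1)) x₀ = T ((T.toEquiv ^ (i : ℤ)) x₀) := by
        rw [show ((i:ℤ)+1) = 1 + (i:ℤ) by ring, zpow_one_add]
        simp [Equiv.Perm.mul_apply]
      rw [hpow, hinv, ih]
    | pred i ih =>
      have hpow : (T.toEquiv ^ (-(i : ℤ) - 1)) x₀ = T.symm ((T.toEquiv ^ (-(i : ℤ))) x₀) := by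
        rw [show (-(i:ℤ)-1) = (-1) + (-(i:ℤ)) by ring, zpow_add, zpow_neg_one]
        simp [Equiv.Perm.mul_apply, Equiv.Perm.inv_def]
      rw [hpow, hsymm, ih]
  have hclosed : IsClosed {y : X | φ y = φ x₀} := isClosed_eq hφ continuous_const
  have hsub : Set.range (fun n : ℤ => (T.toEquiv ^ n) x₀) ⊆ {y : X | φ y = φ x₀} := by
    rintro _ ⟨n, rfl⟩; exact horb n
  have hcl : closure (Set.range fun n : ℤ => (T.toEquiv ^ n) x₀) ⊆ {y | φ y = φ x₀} :=
    closure_minimal hsub hclosed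
  have hx : x ∈ closure (Set.range fun n : ℤ => (T.toEquiv ^ n) x₀) := by
    rw [(hmin x₀).closure_eq]; trivial
  exact hcl hx
open Complex

noncomputable section

lemma exp_log_im_unit (z : ℂ) (hz : ‖z‖ = 1) :
    Complex.exp (2 * Real.pi * I * (((Complex.log z).im / (2 * Real.pi) : ℝ) : ℂ)) = z := by
  have hz0 : z ≠ 0 := by
    intro h0; rw [h0] at hz; simp at hz
  have hre : (Complex.log z).re = 0 := by
    rw [Complex.log_re, hz, Real.log_one]
  have hzim : Complex.log z = ((Complex.log z).im : ℂ) * I := by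
    nth_rewrite 1 [← Complex.re_add_im (Complex.log z)]
    rw [hre]; simp
  have harg : (2 * (Real.pi:ℂ) * I * (((Complex.log z).im / (2 * Real.pi) : ℝ) : ℂ))
      = Complex.log z := by
    nth_rewrite 2 [hzim]
    push_cast
    have hpi : (Real.pi : ℂ) ≠ 0 := by exact_mod_cast Real.pi_ne_zero
    field_simp
  rw [show (2 * (Real.pi:ℝ) * I : ℂ) = 2 * (Real.pi:ℂ) * I by push_cast; ring] at *
  rw [harg, Complex.exp_log hz0]

/-- On a compact totally disconnected T2 space, a continuous map to the unit circle
lifts through `exp (2πi ·)`. -/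
lemma exists_real_lift {X : Type*} [TopologicalSpace X] [CompactSpace X] [T2Space X]
    [TotallyDisconnectedSpace X] (u : X → ℂ) (hu : Continuous u)
    (habs : ∀ x, ‖u x‖ = 1) :
    ∃ h : X → ℝ, Continuous h ∧ ∀ x, u x = Complex.exp (2 * Real.pi * I * (h x : ℂ)) := by
  classical
  have hune : ∀ x, u x ≠ 0 := fun x => by
    intro h0; have := habs x; rw [h0] at this; simp at this
  have hclopen : ∀ y : X, ∃ C : Set X, IsClopen C ∧ y ∈ C ∧
      ∀ x ∈ C, ‖u x - u y‖ < 1 := by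
    intro y
    have hW : IsOpen {x | ‖u x - u y‖ < 1} :=
      isOpen_lt (Continuous.comp continuous_norm (hu.sub continuous_const)) continuous_const
    have hyW : y ∈ {x | ‖u x - u y‖ < 1} := by simp
    obtain ⟨C, hC, hyC, hCW⟩ :=
      (isTopologicalBasis_isClopen (X := X)).exists_subset_of_mem_open hyW hW
    exact ⟨C, hC, hyC, fun x hx => hCW hx⟩
  choose C hCclopen hCmem hCsmall using hclopen
  obtain ⟨t, ht⟩ := IsCompact.elim_finite_subcover isCompact_univ C
    (fun y => (hCclopen y).2) (fun x _ => Set.mem_iUnion.mpr ⟨x, hCmem x⟩)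
  set l := t.toList with hl
  set N := l.length with hN
  have hcover : ∀ x : X, ∃ i : Fin N, x ∈ C (l.get i) := by
    intro x
    obtain ⟨y, hyt, hxy⟩ := Set.mem_iUnion₂.mp (ht (Set.mem_univ x))
    have hyl : y ∈ l := by rw [hl]; exact Finset.mem_toList.mpr hyt
    obtain ⟨i, hi⟩ := List.mem_iff_get.mp hyl
    exact ⟨i, by rwa [hi]⟩
  set D : Fin N → Set X := fun i => C (l.get i) with hD
  have hDclopen : ∀ i, IsClopen (D i) := fun i => hCclopen _
  set V : Fin N → Set X := fun i => D i \ ⋃ j ∈ Finset.univ.filter (fun j => j < i), D j with hV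
  have hVclopen : ∀ i, IsClopen (V i) := fun i =>
    (hDclopen i).diff (isClopen_biUnion_finset (fun j _ => hDclopen j))
  have hVD : ∀ i, V i ⊆ D i := fun i => Set.diff_subset
  -- partition property
  have hpart : ∀ x : X, ∃ i, x ∈ V i ∧ ∀ j, j ≠ i → x ∉ V j := by
    intro x
    have hex : ∃ n : ℕ, ∃ hn : n < N, x ∈ D ⟨n, hn⟩ := by
      obtain ⟨i, hi⟩ := hcover x; exact ⟨i.1, i.2, hi⟩
    obtain ⟨hn, hxn⟩ := Nat.find_spec hex
    set i₀ : Fin N := ⟨Nat.find hex, hn⟩ with hi₀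
    have hmin : ∀ j : Fin N, j < i₀ → x ∉ D j := by
      intro j hj hxj
      exact Nat.find_min hex (by exact_mod_cast hj) ⟨j.2, by simpa using hxj⟩
    refine ⟨i₀, ⟨hxn, ?_⟩, ?_⟩
    · intro hmem
      simp only [Set.mem_iUnion, Finset.mem_filter, Finset.mem_univ, true_and] at hmem
      obtain ⟨j, hji, hxj⟩ := hmem
      exact hmin j hji hxj
    · intro j hji hxj
      rcases lt_or_gt_of_ne hji with hlt | hgt
      · exact hmin j hlt (hVD j hxj)
      · apply hxj.2
        simp only [Set.mem_iUnion, Finset.mem_filter, Finset.mem_univ, true_and]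
        exact ⟨i₀, hgt, hxn⟩
  -- base values and local logarithm data
  set base : Fin N → ℂ := fun i => u (l.get i) with hbase
  have hbase_abs : ∀ i, ‖base i‖ = 1 := fun i => habs _
  have hbase_ne : ∀ i, base i ≠ 0 := fun i => hune _
  set w : Fin N → X → ℂ := fun i x => u x / base i with hw
  have hwabs : ∀ i x, ‖w i x‖ = 1 := by
    intro i x; rw [hw]; simp [norm_div, habs, hbase_abs]
  have hwslit : ∀ i, ∀ x ∈ D i, w i x ∈ Complex.slitPlane := by
    intro i x hx
    have hsmall : ‖u x - base i‖ < 1 := hCsmall _ _ hx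
    have hw1 : ‖w i x - 1‖ < 1 := by
      rw [hw]; simp only
      rw [div_sub_one (hbase_ne i)]
      rw [norm_div, hbase_abs i, div_one]
      exact hsmall
    have hnsq : Complex.normSq (w i x - 1) = Complex.normSq (w i x) - 2 * (w i x).re + 1 := by
      simp [Complex.normSq_apply, Complex.sub_re, Complex.sub_im]; ring
    have h1 : Complex.normSq (w i x) = 1 := by
      rw [Complex.normSq_eq_norm_sq, hwabs]; norm_num
    have h2 : Complex.normSq (w i x - 1) < 1 := by
      rw [Complex.normSq_eq_norm_sq]
      nlinarith [norm_nonneg (w i x - 1)]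
    have hre : 0 < (w i x).re := by nlinarith
    exact Complex.mem_slitPlane_iff.mpr (Or.inl hre)
  set θ : Fin N → ℝ := fun i => (Complex.log (base i)).im / (2 * Real.pi) with hθ
  set ℓ : Fin N → X → ℝ :=
    fun i x => θ i + (Complex.log (w i x)).im / (2 * Real.pi) with hℓ
  -- continuity of each ℓ i on V i and of indicator pieces
  have hℓcont : ∀ i, ∀ x ∈ V i, ContinuousAt (ℓ i) x := by
    intro i x hx
    have hwc : ContinuousAt (fun y => w i y) x := (hu.div_const _).continuousAt
    have hlog : ContinuousAt (fun y => Complex.log (w i y)) x :=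
      (continuousAt_clog (hwslit i x (hVD i hx))).comp hwc
    have him : ContinuousAt (fun y => (Complex.log (w i y)).im / (2 * Real.pi)) x :=
      (Complex.continuous_im.continuousAt.comp hlog).div_const _
    exact continuousAt_const.add him
  set h : X → ℝ := fun x => ∑ i : Fin N, (V i).indicator (ℓ i) x with hh
  have hcont : Continuous h := by
    apply continuous_finset_sum
    intro i _
    rw [continuous_iff_continuousAt]
    intro x
    by_cases hx : x ∈ V i
    · refine (hℓcont i x hx).congr ?_
      have hmem : V i ∈ nhds x := (hVclopen i).2.mem_nhds hx
      exact Filter.eventuallyEq_of_mem hmem (fun y hy => (Set.indicator_of_mem hy _).symm)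
    · refine ContinuousAt.congr (f := fun _ => (0:ℝ)) continuousAt_const ?_
      have hmem : (V i)ᶜ ∈ nhds x := ((hVclopen i).1.isOpen_compl).mem_nhds hx
      exact Filter.eventuallyEq_of_mem hmem (fun y hy => (Set.indicator_of_notMem hy _).symm)
  refine ⟨h, hcont, ?_⟩
  intro x
  obtain ⟨i, hxi, hother⟩ := hpart x
  have hhx : h x = ℓ i x := by
    simp only [hh]
    rw [Finset.sum_eq_single_of_mem i (Finset.mem_univ i)
      (fun j _ hji => Set.indicator_of_notMem (hother j hji) _)]
    exact Set.indicator_of_mem hxi _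
  have e1 : Complex.exp (2 * Real.pi * I * ((θ i : ℝ) : ℂ)) = base i :=
    exp_log_im_unit _ (hbase_abs i)
  have e2 : Complex.exp (2 * Real.pi * I * (((Complex.log (w i x)).im / (2 * Real.pi) : ℝ) : ℂ))
      = w i x := exp_log_im_unit _ (hwabs i x)
  have hbw : u x = base i * w i x := by
    rw [hw]; field_simp; rw [mul_div_cancel_right₀ _ (hbase_ne i)]
  calc u x = base i * w i x := hbw
    _ = Complex.exp (2 * Real.pi * I * ((θ i : ℝ) : ℂ)) *
        Complex.exp (2 * Real.pi * I * (((Complex.log (w i x)).im / (2 * Real.pi) : ℝ) : ℂ)) := by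
        rw [e1, e2]
    _ = Complex.exp (2 * Real.pi * I * ((h x : ℝ) : ℂ)) := by
        rw [← Complex.exp_add, hhx, hℓ]
        congr 1
        push_cast
        ring
open Filter

noncomputable section

lemma exists_zero_row (c : ℕ → ℕ → ℝ) (B : ℕ → ℝ) (hB : ∀ j m, |c j m| ≤ B j)
    (hcover : ∀ s : ℝ, s ∈ Set.Icc (1/4 : ℝ) (1/2) → ∃ j, (∑' m, c j m * s ^ m) = 0) :
    ∃ j, ∀ m, c j m = 0 := by
  classical
  set p : ℕ → FormalMultilinearSeries ℝ ℝ ℝ :=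
    fun j => FormalMultilinearSeries.ofScalars ℝ (c j) with hp
  have hrad : ∀ j, (1 : ENNReal) ≤ (p j).radius := by
    intro j
    have := (p j).le_radius_of_bound (B j) (r := 1) (by
      intro n
      rw [hp]
      simp only [FormalMultilinearSeries.ofScalars_norm]
      rw [Real.norm_eq_abs]
      calc |c j n| * (1:ℝ)^n = |c j n| := by norm_num
        _ ≤ B j := hB j n)
    simpa using this
  have hball : ∀ j, HasFPowerSeriesOnBall (p j).sum (p j) 0 1 := fun j =>
    ((p j).hasFPowerSeriesOnBall (lt_of_lt_of_le zero_lt_one (hrad j))).mono zero_lt_one (hrad j)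
  have hsum : ∀ j (s : ℝ), (p j).sum s = ∑' m, c j m * s ^ m := by
    intro j s
    rw [FormalMultilinearSeries.sum]
    refine tsum_congr fun n => ?_
    rw [hp]
    rw [FormalMultilinearSeries.ofScalars_apply_eq]
    rw [smul_eq_mul]
  set S : Set ℝ := Set.Icc (1/4 : ℝ) (1/2) with hS
  have hSball : ∀ s : ℝ, s ∈ S → s ∈ Metric.eball (0:ℝ) 1 := by
    intro s hs
    have hball1 : Metric.eball (0:ℝ) 1 = Metric.ball (0:ℝ) 1 := by
      rw [← Metric.emetric_ball, ENNReal.ofReal_one]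
    rw [hball1, Metric.mem_ball, Real.dist_eq, sub_zero]
    obtain ⟨h1, h2⟩ := hs
    rw [abs_lt]; constructor <;> linarith
  haveI : CompleteSpace ↥S := isClosed_Icc.completeSpace_coe
  haveI : Nonempty ↥S := ⟨⟨1/4, by constructor <;> norm_num⟩⟩
  set Z : ℕ → Set ↥S := fun j => {s : ↥S | (p j).sum ↑s = 0} with hZ
  have hZclosed : ∀ j, IsClosed (Z j) := by
    intro j
    have hcont : Continuous (S.restrict (p j).sum) :=
      ContinuousOn.restrict (((hball j).continuousOn).mono (fun s hs => hSball s hs))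
    exact isClosed_singleton.preimage hcont
  have hZcover : (⋃ j, Z j) = Set.univ := by
    ext s
    simp only [Set.mem_iUnion, Set.mem_univ, iff_true]
    obtain ⟨j, hj⟩ := hcover s.1 s.2
    exact ⟨j, by rw [hZ]; simp only [Set.mem_setOf_eq]; rw [hsum]; exact hj⟩
  obtain ⟨j, s₀, hs₀⟩ := nonempty_interior_of_iUnion_of_closed hZclosed hZcover
  obtain ⟨ε, hε, hballsub⟩ := Metric.mem_nhds_iff.mp (mem_interior_iff_mem_nhds.mp hs₀)
  have hzero : ∀ z : ℝ, z ∈ S → |z - (s₀ : ℝ)| < ε → (p j).sum z = 0 := by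
    intro z hz hd
    have : (⟨z, hz⟩ : ↥S) ∈ Metric.ball s₀ ε := by
      rw [Metric.mem_ball, Subtype.dist_eq, Real.dist_eq]; exact hd
    exact hballsub this
  have hfreq : ∃ᶠ z in nhdsWithin (s₀ : ℝ) {(s₀ : ℝ)}ᶜ, (p j).sum z = 0 := by
    rw [Filter.frequently_iff]
    intro U hU
    obtain ⟨δ, hδ, hsub⟩ := Metric.mem_nhdsWithin_iff.mp hU
    obtain ⟨hs₁, hs₂⟩ := s₀.2
    by_cases hc : (s₀ : ℝ) < 1/2
    · set d := min (δ/2) (min (ε/2) ((1/2 - (s₀:ℝ))/2)) with hd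
      have hdpos : 0 < d := by
        apply lt_min (by linarith) (lt_min (by linarith) (by linarith))
      set z := (s₀ : ℝ) + d with hz
      have hzS : z ∈ S := by
        constructor
        · have : (1/4:ℝ) ≤ (s₀:ℝ) := hs₁
          linarith
        · have : d ≤ (1/2 - (s₀:ℝ))/2 := le_trans (min_le_right _ _) (min_le_right _ _)
          linarith
      have habs : |z - (s₀:ℝ)| = d := by rw [hz]; simp [abs_of_pos hdpos]
      refine ⟨z, hsub ⟨?_, ?_⟩, ?_⟩
      · rw [Metric.mem_ball, Real.dist_eq, habs]
        exact lt_of_le_of_lt (min_le_left _ _) (by linarith)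
      · simp only [Set.mem_compl_iff, Set.mem_singleton_iff]
        intro h0; rw [hz] at h0; nlinarith
      · exact hzero z hzS (by rw [habs]; exact lt_of_le_of_lt (le_trans (min_le_right _ _) (min_le_left _ _)) (by linarith))
    · have hs12 : (s₀ : ℝ) = 1/2 := le_antisymm hs₂ (not_lt.mp hc)
      set d := min (δ/2) (min (ε/2) (1/8 : ℝ)) with hd
      have hdpos : 0 < d := by
        apply lt_min (by linarith) (lt_min (by linarith) (by norm_num))
      set z := (s₀ : ℝ) - d with hz
      have hd8 : d ≤ 1/8 := le_trans (min_le_right _ _) (min_le_right _ _)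
      have hzS : z ∈ S := by
        constructor
        · rw [hz, hs12]; linarith
        · rw [hz]; linarith
      have habs : |z - (s₀:ℝ)| = d := by rw [hz]; simp [abs_of_pos hdpos]
      refine ⟨z, hsub ⟨?_, ?_⟩, ?_⟩
      · rw [Metric.mem_ball, Real.dist_eq, habs]
        exact lt_of_le_of_lt (min_le_left _ _) (by linarith)
      · simp only [Set.mem_compl_iff, Set.mem_singleton_iff]
        intro h0; rw [hz] at h0; nlinarith
      · exact hzero z hzS (by rw [habs]; exact lt_of_le_of_lt (le_trans (min_le_right _ _) (min_le_left _ _)) (by linarith))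
  have hpre : IsPreconnected (Metric.eball (0:ℝ) 1) := by
    have hball1 : Metric.eball (0:ℝ) 1 = Metric.ball (0:ℝ) 1 := by
      rw [← Metric.emetric_ball, ENNReal.ofReal_one]
    rw [hball1]
    exact (convex_ball _ _).isPreconnected
  have heq : Set.EqOn ((p j).sum) 0 (Metric.eball (0:ℝ) 1) :=
    AnalyticOnNhd.eqOn_zero_of_preconnected_of_frequently_eq_zero
      ((hball j).analyticOnNhd) hpre (hSball _ s₀.2) hfreq
  have hev : (p j).sum =ᶠ[nhds (0:ℝ)] 0 := by
    have hopen : Metric.eball (0:ℝ) 1 ∈ nhds (0:ℝ) :=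
      Metric.isOpen_eball.mem_nhds (Metric.mem_eball_self (by norm_num))
    exact Filter.eventuallyEq_of_mem hopen (fun z hz => heq hz)
  have hpz : p j = 0 := ((hball j).hasFPowerSeriesAt.congr hev).eq_zero
  refine ⟨j, fun m => ?_⟩
  have hm : (p j) m = 0 := by rw [hpz]; rfl
  rw [hp] at hm
  exact (FormalMultilinearSeries.ofScalars_eq_zero ℝ m).mp hm
open MeasureTheory

noncomputable section

lemma integral_comp_homeo {X : Type*} [TopologicalSpace X] [MeasurableSpace X] [BorelSpace X]
    (T : X ≃ₜ X) (μ : Measure X) (hinv : Measure.map T μ = μ) {h : X → ℝ}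
    (hh : Continuous h) : ∫ x, h (T x) ∂μ = ∫ x, h x ∂μ := by
  conv_rhs => rw [← hinv]
  rw [MeasureTheory.integral_map (T.continuous.measurable.aemeasurable) hh.aestronglyMeasurable]

lemma mix_prob {X : Type*} [MeasurableSpace X]
    (ν : ℕ → Measure X) (hprob : ∀ m, IsProbabilityMeasure (ν m))
    (s : ℝ) (hs0 : 0 ≤ s) (hs1 : s < 1) :
    IsProbabilityMeasure (Measure.sum fun m => ENNReal.ofReal ((1-s)*s^m) • ν m) := by
  constructor
  rw [Measure.sum_apply _ MeasurableSet.univ]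
  have h1 : ∀ m : ℕ, (ENNReal.ofReal ((1-s)*s^m) • ν m) Set.univ = ENNReal.ofReal ((1-s)*s^m) := by
    intro m
    rw [Measure.smul_apply, (hprob m).measure_univ, smul_eq_mul, mul_one]
  rw [tsum_congr h1]
  have h2 : ∀ m : ℕ, ENNReal.ofReal ((1-s)*s^m)
      = ENNReal.ofReal (1-s) * (ENNReal.ofReal s)^m := by
    intro m
    rw [ENNReal.ofReal_mul (by linarith), ENNReal.ofReal_pow hs0]
  rw [tsum_congr h2, ENNReal.tsum_mul_left, ENNReal.tsum_geometric]
  have h3 : (1 : ENNReal) - ENNReal.ofReal s = ENNReal.ofReal (1-s) := by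
    rw [ENNReal.ofReal_sub _ hs0, ENNReal.ofReal_one]
  rw [h3]
  exact ENNReal.mul_inv_cancel (by simp [ENNReal.ofReal_pos]; linarith) ENNReal.ofReal_ne_top

lemma mix_invariant {X : Type*} [TopologicalSpace X] [MeasurableSpace X] [BorelSpace X]
    (T : X ≃ₜ X) (ν : ℕ → Measure X) (hinv : ∀ m, Measure.map T (ν m) = ν m)
    (w : ℕ → ENNReal) :
    Measure.map T (Measure.sum fun m => w m • ν m) = Measure.sum fun m => w m • ν m := by
  rw [Measure.map_sum (T.continuous.measurable.aemeasurable)]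
  congr 1
  funext m
  rw [Measure.map_smul, hinv m]

lemma mix_integral {X : Type*} [TopologicalSpace X] [CompactSpace X] [T2Space X]
    [MeasurableSpace X] [BorelSpace X]
    (ν : ℕ → Measure X) (hprob : ∀ m, IsProbabilityMeasure (ν m))
    (s : ℝ) (hs0 : 0 ≤ s) (hs1 : s < 1) (f : X → ℝ) (hf : Continuous f) :
    ∫ x, f x ∂(Measure.sum fun m => ENNReal.ofReal ((1-s)*s^m) • ν m)
      = ∑' m, (1-s)*s^m * ∫ x, f x ∂(ν m) := by
  haveI := mix_prob ν hprob s hs0 hs1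
  have hint : Integrable f (Measure.sum fun m => ENNReal.ofReal ((1-s)*s^m) • ν m) :=
    hf.integrable_of_hasCompactSupport (HasCompactSupport.of_compactSpace _)
  rw [integral_sum_measure hint]
  refine tsum_congr fun m => ?_
  rw [integral_smul_measure, ENNReal.toReal_ofReal (mul_nonneg (by linarith) (pow_nonneg hs0 m)), smul_eq_mul]

open MeasureTheory Complex

section maintheorem

variable {X : Type*} [TopologicalSpace X] [CompactSpace X] [TopologicalSpace.MetrizableSpace X]
    [TotallyDisconnectedSpace X] [Nonempty X] [MeasurableSpace X] [BorelSpace X]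

theorem stmt0' (T : X ≃ₜ X)
    (hmin : ∀ x : X, Dense (Set.range fun n : ℤ => (T.toEquiv ^ n) x))
    (hinf : ∀ f : C(X, ℤ),
      (∀ μ : Measure X, IsProbabilityMeasure μ → Measure.map T μ = μ →
        ∫ x, (f x : ℝ) ∂μ = 0) →
      ∃ g : C(X, ℤ), ∀ x : X, f x = g (T x) - g x)
    (α : ℝ) (k : ℤ) (hk : 1 ≤ k)
    (hαI : ∀ μ : Measure X, IsProbabilityMeasure μ → Measure.map T μ = μ →
      ∃ f : C(X, ℤ), ∫ x, (f x : ℝ) ∂μ = α)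
    (hkα : ∃ f : C(X, ℂ), f ≠ 0 ∧
      ∀ x : X, f (T x) = Complex.exp (2 * Real.pi * Complex.I * ((k : ℝ) * α)) * f x) :
    ∃ f : C(X, ℂ), f ≠ 0 ∧
      ∀ x : X, f (T x) = Complex.exp (2 * Real.pi * Complex.I * α) * f x := by
  classical
  letI := TopologicalSpace.metrizableSpaceMetric X
  obtain ⟨f, hf0, hfeig⟩ := hkα
  obtain ⟨x₀, hx₀⟩ : ∃ x, f x ≠ 0 := by
    by_contra hc; push_neg at hc
    exact hf0 (ContinuousMap.ext fun x => by simpa using hc x)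
  set c : ℂ := 2 * Real.pi * Complex.I * ((k : ℝ) * α) with hc
  have hcre : c.re = 0 := by
    rw [hc]
    simp [Complex.mul_re, Complex.mul_im]
  have habs_exp_c : ‖Complex.exp c‖ = 1 := by
    rw [Complex.norm_exp, hcre, Real.exp_zero]
  set r : ℝ := ‖f x₀‖ with hr
  have hrpos : 0 < r := by
    rw [hr]; exact norm_pos_iff.mpr hx₀
  have hconst : ∀ x, ‖f x‖ = r := by
    intro x
    refine invariant_const' T hmin (φ := fun x => ‖f x‖)
      (continuous_norm.comp f.continuous) ?_ x₀ x
    intro y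
    show ‖f (T y)‖ = ‖f y‖
    rw [hfeig y, norm_mul, habs_exp_c, one_mul]
  set u : X → ℂ := fun x => f x / (r : ℂ) with hu
  have hucont : Continuous u := f.continuous.div_const _
  have huabs : ∀ x, ‖u x‖ = 1 := by
    intro x
    rw [hu]
    simp only [norm_div, hconst x, Complex.norm_real, Real.norm_eq_abs, abs_of_pos hrpos]
    field_simp
  have hune : ∀ x, u x ≠ 0 := fun x h0 => by
    have := huabs x; rw [h0] at this; simp at this
  have hueig : ∀ x, u (T x) = Complex.exp c * u x := by
    intro x
    rw [hu]
    simp only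
    rw [hfeig x]
    ring
  obtain ⟨h, hhc, hhu⟩ := exists_real_lift u hucont huabs
  -- the integer cocycle
  set nR : X → ℝ := fun x => h (T x) - h x - (k : ℝ) * α with hnR
  have hnRcont : Continuous nR := ((hhc.comp T.continuous).sub hhc).sub continuous_const
  have hexp1 : ∀ x, Complex.exp (2 * Real.pi * Complex.I * (nR x : ℂ)) = 1 := by
    intro x
    have hsplit : (2 * Real.pi * Complex.I * (nR x : ℂ))
        = 2 * Real.pi * Complex.I * ((h (T x) : ℝ) : ℂ)
          - 2 * Real.pi * Complex.I * ((h x : ℝ) : ℂ) - c := by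
      rw [hnR, hc]; push_cast; ring
    rw [hsplit, Complex.exp_sub, Complex.exp_sub, ← hhu, ← hhu, hueig x]
    rw [mul_div_assoc, div_self (hune x), mul_one, div_self (Complex.exp_ne_zero c)]
  have hint : ∀ x, ∃ m : ℤ, nR x = (m : ℝ) := by
    intro x
    obtain ⟨m, hm⟩ := Complex.exp_eq_one_iff.mp (hexp1 x)
    refine ⟨m, ?_⟩
    have hne : (2 * (Real.pi : ℂ) * Complex.I) ≠ 0 := by
      simp [Real.pi_ne_zero, Complex.I_ne_zero]
    have h2 : ((nR x : ℝ) : ℂ) = (m : ℂ) := by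
      apply mul_left_cancel₀ hne
      rw [show (2 * (Real.pi:ℂ) * Complex.I) * ((nR x : ℝ):ℂ)
          = 2 * Real.pi * Complex.I * (nR x : ℂ) by ring, hm]
      ring
    exact_mod_cast h2
  -- round to an integer-valued continuous map
  have hNcont : Continuous (fun x => round (nR x)) := by
    rw [continuous_iff_continuousAt]
    intro x
    have hev : ∀ᶠ y in nhds x, nR y ∈ Metric.ball (nR x) (1/2) :=
      hnRcont.continuousAt.preimage_mem_nhds (Metric.ball_mem_nhds _ (by norm_num))
    have heq : (fun y => round (nR y)) =ᶠ[nhds x] (fun _ => round (nR x)) := by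
      filter_upwards [hev] with y hy
      obtain ⟨my, hmy⟩ := hint y
      obtain ⟨mx, hmx⟩ := hint x
      rw [Metric.mem_ball, Real.dist_eq, hmy, hmx] at hy
      have : my = mx := by
        have habs : |(my : ℝ) - (mx : ℝ)| < 1 := by linarith [hy]
        have h3 : |my - mx| < 1 := by exact_mod_cast (by push_cast; exact habs : |((my - mx : ℤ) : ℝ)| < 1)
        have h4 := abs_lt.mp h3
        omega
      rw [hmy, hmx, this]
    exact ContinuousAt.congr (continuousAt_const (y := round (nR x))) heq.symm
  set Nf : C(X, ℤ) := ⟨fun x => round (nR x), hNcont⟩ with hNf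
  have hNcast : ∀ x, ((Nf x : ℤ) : ℝ) = nR x := by
    intro x
    obtain ⟨m, hm⟩ := hint x
    rw [hNf]
    simp only [ContinuousMap.coe_mk]
    rw [hm, round_intCast]
  -- its integral against every invariant measure
  have hNint : ∀ μ : Measure X, IsProbabilityMeasure μ → Measure.map T μ = μ →
      ∫ x, ((Nf x : ℤ) : ℝ) ∂μ = -((k : ℝ) * α) := by
    intro μ hμp hμi
    haveI := hμp
    have hig : ∀ (φ : X → ℝ), Continuous φ → Integrable φ μ := fun φ hφ =>
      hφ.integrable_of_hasCompactSupport (HasCompactSupport.of_compactSpace _)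
    calc ∫ x, ((Nf x : ℤ) : ℝ) ∂μ = ∫ x, (h (T x) - h x - (k : ℝ) * α) ∂μ := by
          refine integral_congr_ae (Filter.Eventually.of_forall fun x => ?_)
          show ((Nf x : ℤ) : ℝ) = h (T x) - h x - (k : ℝ) * α
          rw [hNcast x, hnR]
      _ = ∫ x, (h (T x) - h x) ∂μ - ∫ _x, ((k:ℝ) * α) ∂μ :=
          integral_sub ((hig _ (hhc.comp T.continuous)).sub (hig _ hhc)) (hig _ continuous_const)
      _ = -((k : ℝ) * α) := by
          have h6 : ∫ x, (h (T x) - h x) ∂μ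
              = (∫ x, h (T x) ∂μ) - ∫ x, h x ∂μ :=
            integral_sub (hig (fun x => h (T x)) (hhc.comp T.continuous)) (hig h hhc)
          rw [h6, integral_comp_homeo T μ hμi hhc, integral_const]
          simp
  -- main combinatorial/analytic step: find a single integer function matching -α everywhere
  haveI : Countable C(X, ℤ) := countable_intCM
  haveI : Nonempty C(X, ℤ) := ⟨0⟩
  obtain ⟨F, hF⟩ := exists_surjective_nat C(X, ℤ)
  have key : ∃ m : C(X, ℤ), ∀ μ : Measure X, IsProbabilityMeasure μ → Measure.map T μ = μ →
      ∫ x, (((Nf x : ℤ) : ℝ) + (k : ℝ) * (m x : ℝ)) ∂μ = 0 := by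
    by_contra hno
    push_neg at hno
    have hno' : ∀ j : ℕ, ∃ μ : Measure X, IsProbabilityMeasure μ ∧ Measure.map T μ = μ ∧
        ∫ x, (((Nf x : ℤ) : ℝ) + (k : ℝ) * ((F j) x : ℝ)) ∂μ ≠ 0 := fun j => hno (F j)
    choose ν hν1 hν2 hν3 using hno'
    set φ : ℕ → C(X, ℝ) := fun j =>
      ⟨fun x => ((Nf x : ℤ) : ℝ) + (k : ℝ) * ((F j) x : ℝ), by
        refine Continuous.add ?_ (Continuous.mul continuous_const ?_)
        · exact (continuous_of_discreteTopology (f := (Int.cast : ℤ → ℝ))).comp Nf.continuous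
        · exact (continuous_of_discreteTopology (f := (Int.cast : ℤ → ℝ))).comp (F j).continuous⟩
      with hφ
    set cM : ℕ → ℕ → ℝ := fun j m => ∫ x, (φ j) x ∂(ν m) with hcM
    have hBnd : ∀ j m, |cM j m| ≤ ‖φ j‖ := by
      intro j m
      haveI := hν1 m
      have := norm_integral_le_of_norm_le_const (μ := ν m) (f := fun x => (φ j) x)
        (C := ‖φ j‖) (Filter.Eventually.of_forall fun x => (φ j).norm_coe_le_norm x)
      rwa [probReal_univ, mul_one, Real.norm_eq_abs] at this
    have hcover : ∀ s : ℝ, s ∈ Set.Icc (1/4 : ℝ) (1/2) →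
        ∃ j, (∑' m, cM j m * s ^ m) = 0 := by
      intro s hs
      have hs0 : (0:ℝ) ≤ s := le_trans (by norm_num) hs.1
      have hs1 : s < 1 := lt_of_le_of_lt hs.2 (by norm_num)
      set μs := Measure.sum (fun m => ENNReal.ofReal ((1-s)*s^m) • ν m) with hμs
      haveI hμsp : IsProbabilityMeasure μs := mix_prob ν hν1 s hs0 hs1
      have hμsi : Measure.map T μs = μs := mix_invariant T ν hν2 _
      obtain ⟨f₀, hf₀⟩ := hαI μs hμsp hμsi
      obtain ⟨j, hj⟩ := hF f₀
      refine ⟨j, ?_⟩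
      have hzero : ∫ x, (φ j) x ∂μs = 0 := by
        have hca : Continuous (fun x => ((Nf x : ℤ) : ℝ)) :=
          (continuous_of_discreteTopology (f := (Int.cast : ℤ → ℝ))).comp Nf.continuous
        have hcb : Continuous (fun x => ((f₀ x : ℤ) : ℝ)) :=
          (continuous_of_discreteTopology (f := (Int.cast : ℤ → ℝ))).comp f₀.continuous
        have hia : Integrable (fun x => ((Nf x : ℤ) : ℝ)) μs :=
          hca.integrable_of_hasCompactSupport (HasCompactSupport.of_compactSpace _)
        have hib : Integrable (fun x => (k : ℝ) * ((f₀ x : ℤ) : ℝ)) μs :=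
          (hcb.integrable_of_hasCompactSupport (HasCompactSupport.of_compactSpace _)).const_mul _
        have : ∫ x, (φ j) x ∂μs
            = ∫ x, ((Nf x : ℤ) : ℝ) ∂μs + ∫ x, (k : ℝ) * ((f₀ x : ℤ) : ℝ) ∂μs := by
          rw [← integral_add hia hib]
          refine integral_congr_ae (Filter.Eventually.of_forall fun x => ?_)
          rw [hφ]
          simp only [ContinuousMap.coe_mk]
          rw [hj]
        rw [this, hNint μs hμsp hμsi, integral_const_mul, hf₀]
        ring
      have hexpand : ∫ x, (φ j) x ∂μs = ∑' m, (1-s)*s^m * cM j m :=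
        mix_integral ν hν1 s hs0 hs1 _ (φ j).continuous
      have hfac : (∑' m, (1-s)*s^m * cM j m) = (1-s) * ∑' m, cM j m * s^m := by
        rw [← tsum_mul_left]
        exact tsum_congr fun m => by ring
      have : (1-s) * (∑' m, cM j m * s^m) = 0 := by
        rw [← hfac, ← hexpand, hzero]
      rcases mul_eq_zero.mp this with h1 | h2
      · exact absurd h1 (by intro hh; linarith [hs.2])
      · exact h2
    obtain ⟨j, hjz⟩ := exists_zero_row cM (fun j => ‖φ j‖) hBnd hcover
    exact hν3 j (hjz j)
  obtain ⟨m, hm⟩ := key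
  -- apply triviality of infinitesimals
  set P : C(X, ℤ) := Nf + k • m with hP
  have hPint : ∀ μ : Measure X, IsProbabilityMeasure μ → Measure.map T μ = μ →
      ∫ x, ((P x : ℤ) : ℝ) ∂μ = 0 := by
    intro μ hμp hμi
    have := hm μ hμp hμi
    rw [← this]
    refine integral_congr_ae (Filter.Eventually.of_forall fun x => ?_)
    rw [hP]
    simp only [ContinuousMap.add_apply, ContinuousMap.smul_apply, smul_eq_mul]
    push_cast
    ring
  obtain ⟨g, hg⟩ := hinf P hPint
  -- build the eigenfunction for α
  have hk0 : (k : ℝ) ≠ 0 := by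
    have : k ≠ 0 := by omega
    exact_mod_cast this
  set H : X → ℝ := fun x => (h x - (g x : ℝ)) / (k : ℝ) with hH
  have hgcont : Continuous (fun x => ((g x : ℤ) : ℝ)) :=
    (continuous_of_discreteTopology (f := (Int.cast : ℤ → ℝ))).comp g.continuous
  have hHcont : Continuous H := (hhc.sub hgcont).div_const _
  refine ⟨⟨fun x => Complex.exp (2 * Real.pi * Complex.I * (H x : ℂ)), by
    exact Complex.continuous_exp.comp (continuous_const.mul (Complex.continuous_ofReal.comp hHcont))⟩,
    ?_, ?_⟩
  · intro h0
    have := ContinuousMap.congr_fun h0 x₀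
    simp only [ContinuousMap.coe_mk, ContinuousMap.zero_apply] at this
    exact Complex.exp_ne_zero _ this
  · intro x
    simp only [ContinuousMap.coe_mk]
    have e1 : h (T x) = ((Nf x : ℤ) : ℝ) + h x + (k : ℝ) * α := by
      have h5 : ((Nf x : ℤ) : ℝ) = h (T x) - h x - (k : ℝ) * α := hNcast x
      linarith
    have e2 : ((g (T x) : ℤ) : ℝ) = ((g x : ℤ) : ℝ) + ((Nf x : ℤ) : ℝ) + (k:ℝ) * ((m x : ℤ):ℝ) := by
      have h4 := hg x
      rw [hP] at h4
      simp only [ContinuousMap.add_apply, ContinuousMap.smul_apply, smul_eq_mul] at h4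
      have h5 : ((Nf x : ℤ) : ℝ) + (k : ℝ) * ((m x : ℤ) : ℝ)
          = ((g (T x) : ℤ) : ℝ) - ((g x : ℤ) : ℝ) := by exact_mod_cast h4
      linarith
    have hHT : H (T x) = H x + α - ((m x : ℤ) : ℝ) := by
      rw [hH]
      simp only
      rw [e1, e2]
      field_simp
      ring
    rw [hHT]
    have hsplit : (2 * Real.pi * Complex.I * ((H x + α - ((m x : ℤ) : ℝ) : ℝ) : ℂ))
        = 2 * Real.pi * Complex.I * (α : ℂ) + 2 * Real.pi * Complex.I * ((H x : ℝ) : ℂ)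
          + ((-(m x) : ℤ) : ℂ) * (2 * Real.pi * Complex.I) := by
      push_cast
      ring
    rw [hsplit, Complex.exp_add, Complex.exp_add, Complex.exp_int_mul_two_pi_mul_I, mul_one]

end maintheorem

/-- If `(X,T)` is a minimal Cantor system whose infinitesimal subgroup of
`K⁰(X,T)` is trivial (every continuous integer-valued function with zero integral against
every invariant probability measure is a coboundary), then `I(X,T)/E(X,T)` is torsion free:
if `α ∈ I(X,T)` and `k·α ∈ E(X,T)` for some integer `k ≥ 1`, then `α ∈ E(X,T)`. -/
theorem stmt0 {X : Type*} [TopologicalSpace X] [CompactSpace X] [TopologicalSpace.MetrizableSpace X]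
    [TotallyDisconnectedSpace X] [Nonempty X] [MeasurableSpace X] [BorelSpace X]
    (hni : ∀ x : X, ¬IsOpen ({x} : Set X))
    (T : X ≃ₜ X)
    (hmin : ∀ x : X, Dense (Set.range fun n : ℤ => (T.toEquiv ^ n) x))
    (hinf : ∀ f : C(X, ℤ),
      (∀ μ : Measure X, IsProbabilityMeasure μ → Measure.map T μ = μ →
        ∫ x, (f x : ℝ) ∂μ = 0) →
      ∃ g : C(X, ℤ), ∀ x : X, f x = g (T x) - g x)
    (α : ℝ) (k : ℤ) (hk : 1 ≤ k)
    (hαI : ∀ μ : Measure X, IsProbabilityMeasure μ → Measure.map T μ = μ →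
      ∃ f : C(X, ℤ), ∫ x, (f x : ℝ) ∂μ = α)
    (hkα : ∃ f : C(X, ℂ), f ≠ 0 ∧
      ∀ x : X, f (T x) = Complex.exp (2 * Real.pi * Complex.I * ((k : ℝ) * α)) * f x) :
    ∃ f : C(X, ℂ), f ≠ 0 ∧
      ∀ x : X, f (T x) = Complex.exp (2 * Real.pi * Complex.I * α) * f x :=
  stmt0' T hmin hinf α k hk hαI hkα
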